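/- (Theorem 2(iii), matrix form) Assume t ≠ 0, U ≠ 0, W > 0, and 4I = zW. Then every configuration of the following kinds attains the minimum over all ion configurations of the energy functional E(C) = −(1/2) Σ_{σ=1}^r Tr √((T + U·S_σ(C))²) + H_i^0(C): (a) the two configurations in which all r species fully occupy one sublattice and the other sublattice is empty; (b) for r = 2k even, the C(r,k) configurations in which a k-element subset of species fully occupies Λᵉ and the complementary subset fully occupies Λᵒ; for r = 2k+1 odd, the 2·C(r,k) configurations in which a k-element subset of species fully occupies one sublattice and the complementary (k+1)-element subset fully occupies the other. In particular all these configurations have the same energy E. -/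

import Mathlib

open Finset

/-- Occupation number (0 or 1) attached to a Boolean occupancy variable. -/
noncomputable def occ (b : Bool) : ℝ := if b then 1 else 0

/-- Total number of ions at site `x` (as a real number): `n_x = Σ_σ n_{x,σ}`. -/
noncomputable def nsite {V : Type*} {r : ℕ} (C : V → Fin r → Bool) (x : V) : ℝ :=
  ∑ σ : Fin r, occ (C x σ)

/-- Total number of ions at site `x` (as a natural number). -/
def nnat {V : Type*} {r : ℕ} (C : V → Fin r → Bool) (x : V) : ℕ :=
  ∑ σ : Fin r, (if C x σ then 1 else 0)

/-- The classical Hamiltonian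
`H_i^0(C) = 2I Σ_x Σ_{σ'<σ''} (n_{x,σ'} - 1/2)(n_{x,σ''} - 1/2)
          + (W/2) Σ_{⟨x,y⟩} (n_x - r/2)(n_y - r/2)`,
where the sum over edges `⟨x,y⟩` (each edge counted once) is written as half the
symmetric double sum over ordered adjacent pairs. -/
noncomputable def H0 {V : Type*} [Fintype V] (G : SimpleGraph V) [DecidableRel G.Adj]
    (r : ℕ) (I W : ℝ) (C : V → Fin r → Bool) : ℝ :=
  2 * I * ∑ x : V, ∑ p ∈ Finset.univ.filter (fun p : Fin r × Fin r => p.1 < p.2),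
      (occ (C x p.1) - 1 / 2) * (occ (C x p.2) - 1 / 2)
  + W / 2 * ((∑ x : V, ∑ y : V,
      (if G.Adj x y then (nsite C x - r / 2) * (nsite C y - r / 2) else 0)) / 2)

/-- Hopping matrix: `T_{xy} = t` if `{x,y}` is an edge of `G`, and `0` otherwise. -/
noncomputable def hopMat {V : Type*} (G : SimpleGraph V) [DecidableRel G.Adj]
    (t : ℝ) : Matrix V V ℝ :=
  Matrix.of fun x y => if G.Adj x y then t else 0

/-- Diagonal matrix `S_σ(C)` with entries `(S_σ)_{xx} = 2 n_{x,σ} − 1`. -/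
noncomputable def ionMat {V : Type*} [DecidableEq V] {r : ℕ}
    (C : V → Fin r → Bool) (σ : Fin r) : Matrix V V ℝ :=
  Matrix.diagonal fun x => 2 * occ (C x σ) - 1

/-- `Tr √(A²)`: the trace of the positive semidefinite square root of `A²`
(defined whenever `A²` is positive semidefinite, e.g. for symmetric `A`). -/
noncomputable def trAbs {N : Type*} [Fintype N] [DecidableEq N] (A : Matrix N N ℝ) : ℝ :=
  letI := Classical.dec ((A * A).PosSemidef)
  if h : (A * A).PosSemidef then
    ((h.1.eigenvectorUnitary : Matrix N N ℝ) *
      Matrix.diagonal ((RCLike.ofReal : ℝ → ℝ) ∘ (Real.sqrt ∘ h.1.eigenvalues)) *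
      (star h.1.eigenvectorUnitary : Matrix N N ℝ)).trace else 0

/-- The ground-state energy functional at the hole–particle symmetry point:
`E(C) = −(1/2) Σ_σ Tr √((T + U·S_σ(C))²) + H_i^0(C)`. -/
noncomputable def Efun {V : Type*} [Fintype V] [DecidableEq V] (G : SimpleGraph V)
    [DecidableRel G.Adj] (r : ℕ) (t U I W : ℝ) (C : V → Fin r → Bool) : ℝ :=
  -(1 / 2) * ∑ σ : Fin r, trAbs (hopMat G t + U • ionMat C σ) + H0 G r I W C

section SqrtPort

open scoped MatrixOrder

namespace Matrix.PosSemidef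

variable {N : Type*} [Fintype N] [DecidableEq N]

noncomputable def sqrt {M : Matrix N N ℝ} (hM : M.PosSemidef) : Matrix N N ℝ :=
  (hM.1.eigenvectorUnitary : Matrix N N ℝ) *
      Matrix.diagonal ((RCLike.ofReal : ℝ → ℝ) ∘ (Real.sqrt ∘ hM.1.eigenvalues)) *
      (star hM.1.eigenvectorUnitary : Matrix N N ℝ)

lemma sqrt_eq_cfc {M : Matrix N N ℝ} (hM : M.PosSemidef) : hM.sqrt = CFC.sqrt M := by
  rw [CFC.sqrt_eq_real_sqrt M hM.nonneg, cfcₙ_eq_cfc (hf0 := by simp), hM.1.cfc_eq]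
  rfl

lemma posSemidef_sqrt {M : Matrix N N ℝ} (hM : M.PosSemidef) : hM.sqrt.PosSemidef := by
  rw [sqrt_eq_cfc]; exact Matrix.nonneg_iff_posSemidef.mp (CFC.sqrt_nonneg M)

lemma sqrt_mul_self {M : Matrix N N ℝ} (hM : M.PosSemidef) : hM.sqrt * hM.sqrt = M := by
  rw [sqrt_eq_cfc]; exact CFC.sqrt_mul_sqrt_self M hM.nonneg

lemma eq_sqrt_of_sq_eq {M : Matrix N N ℝ} (hM : M.PosSemidef) (B : Matrix N N ℝ)
    (hB : B.PosSemidef) (hBM : B ^ 2 = M) : B = hM.sqrt := by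
  rw [sqrt_eq_cfc]; exact (CFC.sqrt_unique (by rw [← hBM, pow_two]) hB.nonneg).symm

end Matrix.PosSemidef

end SqrtPort

section AuxStmt14

open Finset Matrix

namespace Stmt14Aux

variable {N : Type*} [Fintype N] [DecidableEq N]

lemma trace_nonneg_of_psd {M : Matrix N N ℝ} (hM : M.PosSemidef) : 0 ≤ M.trace := by
  exact hM.trace_nonneg

lemma trace_sqrt_le {M B : Matrix N N ℝ} (hM : M.PosSemidef) (hB : B.PosDef) :
    hM.sqrt.trace ≤ ((M * B⁻¹).trace + B.trace) / 2 := by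
  have hdet : IsUnit B.det := hB.det_pos.ne'.isUnit
  have hBinv : B⁻¹.PosSemidef := hB.inv.posSemidef
  set X := hM.sqrt with hXdef
  have hXh : Xᴴ = X := hM.posSemidef_sqrt.1
  have hBh : Bᴴ = B := hB.isHermitian
  have hpsd : ((X - B) * B⁻¹ * (X - B)).PosSemidef := by
    have h := hBinv.mul_mul_conjTranspose_same (X - B)
    rwa [conjTranspose_sub, hXh, hBh] at h
  have h1 : B * B⁻¹ = 1 := Matrix.mul_nonsing_inv _ hdet
  have h2 : B⁻¹ * B = 1 := Matrix.nonsing_inv_mul _ hdet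
  have hexp : (X - B) * B⁻¹ * (X - B) = X * B⁻¹ * X - X - X + B := by
    simp only [sub_mul, mul_sub, h1, one_mul]
    rw [Matrix.mul_assoc X B⁻¹ B, h2, mul_one]
    abel
  have htr : 0 ≤ (X * B⁻¹ * X).trace - X.trace - X.trace + B.trace := by
    have h0 := trace_nonneg_of_psd hpsd
    rwa [hexp, trace_add, trace_sub, trace_sub] at h0
  have hcyc : (X * B⁻¹ * X).trace = (M * B⁻¹).trace := by
    rw [Matrix.trace_mul_cycle, hM.sqrt_mul_self]
  linarith [htr, hcyc.symm.le]

lemma posDef_sqrt {D : Matrix N N ℝ} (hD : D.PosDef) : (hD.posSemidef.sqrt).PosDef := by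
  rw [Matrix.posDef_iff_dotProduct_mulVec]
  refine ⟨hD.posSemidef.posSemidef_sqrt.1, fun x hx => ?_⟩
  rcases lt_or_eq_of_le (hD.posSemidef.posSemidef_sqrt.dotProduct_mulVec_nonneg x) with h | h
  · exact h
  · exfalso
    have hBx : hD.posSemidef.sqrt *ᵥ x = 0 :=
      (hD.posSemidef.posSemidef_sqrt.dotProduct_mulVec_zero_iff x).mp h.symm
    have hDx : D *ᵥ x = 0 := by
      rw [← hD.posSemidef.sqrt_mul_self, ← Matrix.mulVec_mulVec, hBx, Matrix.mulVec_zero]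
    have hpos := hD.dotProduct_mulVec_pos hx
    rw [hDx, dotProduct_zero] at hpos
    exact lt_irrefl _ hpos

lemma trAbs_of_sq {A D : Matrix N N ℝ} (hD : D.PosSemidef) (h : A * A = D) :
    trAbs A = hD.sqrt.trace := by
  subst h
  unfold trAbs
  exact (dif_pos hD).trans rfl

lemma trAbs_eq_of_herm {A : Matrix N N ℝ} (hA : A.IsHermitian) :
    ∃ h : (A * A).PosSemidef, trAbs A = h.sqrt.trace := by
  have h : (A * A).PosSemidef := by
    have := Matrix.posSemidef_conjTranspose_mul_self A
    rwa [hA.eq] at this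
  exact ⟨h, trAbs_of_sq h rfl⟩

lemma trAbs_neg (A : Matrix N N ℝ) : trAbs (-A) = trAbs A := by
  have h : -A * -A = A * A := neg_mul_neg A A
  by_cases hp : (A * A).PosSemidef
  · rw [trAbs_of_sq hp h, trAbs_of_sq hp rfl]
  · have hn : ¬ (-A * -A).PosSemidef := by rwa [h]
    unfold trAbs
    rw [dif_neg hn, dif_neg hp]

lemma trAbs_conj {A e : Matrix N N ℝ} (hA : A.IsHermitian) (he : e * e = 1)
    (heh : e.IsHermitian) : trAbs (e * A * e) = trAbs A := by
  obtain ⟨hAA, htr⟩ := trAbs_eq_of_herm hA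
  have hsq : (e * A * e) * (e * A * e) = e * (A * A) * e := by
    calc (e * A * e) * (e * A * e) = e * A * (e * e) * A * e := by
          simp only [Matrix.mul_assoc]
      _ = e * (A * A) * e := by rw [he]; simp only [Matrix.mul_assoc, Matrix.one_mul]
  have hpsd2 : (e * (A * A) * e).PosSemidef := by
    have h := hAA.mul_mul_conjTranspose_same e
    rwa [heh.eq] at h
  have hsqrt : e * hAA.sqrt * e = hpsd2.sqrt := by
    apply Matrix.PosSemidef.eq_sqrt_of_sq_eq
    · have h := hAA.posSemidef_sqrt.mul_mul_conjTranspose_same e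
      rwa [heh.eq] at h
    · rw [pow_two]
      calc (e * hAA.sqrt * e) * (e * hAA.sqrt * e) = e * hAA.sqrt * (e * e) * hAA.sqrt * e := by
            simp only [Matrix.mul_assoc]
        _ = e * (hAA.sqrt * hAA.sqrt) * e := by rw [he]; simp only [Matrix.mul_assoc, Matrix.one_mul]
        _ = e * (A * A) * e := by rw [hAA.sqrt_mul_self]
  rw [trAbs_of_sq hpsd2 hsq, ← hsqrt, htr, Matrix.trace_mul_cycle, he, Matrix.one_mul]

lemma electron_pair_bound {A A' D : Matrix N N ℝ} (hA : A.IsHermitian) (hA' : A'.IsHermitian)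
    (hD : D.PosDef) (hsum : A * A + A' * A' = (2:ℝ) • D) :
    trAbs A + trAbs A' ≤ 2 * hD.posSemidef.sqrt.trace := by
  obtain ⟨hM, htrM⟩ := trAbs_eq_of_herm hA
  obtain ⟨hM', htrM'⟩ := trAbs_eq_of_herm hA'
  set B := hD.posSemidef.sqrt with hBdef
  have hBpd : B.PosDef := posDef_sqrt hD
  have hDB : D * B⁻¹ = B := by
    have h1 : B * B⁻¹ = 1 := Matrix.mul_nonsing_inv _ hBpd.det_pos.ne'.isUnit
    rw [← hD.posSemidef.sqrt_mul_self, Matrix.mul_assoc, h1, Matrix.mul_one]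
  have k1 := trace_sqrt_le hM hBpd
  have k2 := trace_sqrt_le hM' hBpd
  have hsumtr : (A * A * B⁻¹).trace + (A' * A' * B⁻¹).trace = 2 * B.trace := by
    rw [← trace_add, ← add_mul, hsum, smul_mul_assoc, hDB, trace_smul]
    simp
  rw [htrM, htrM']
  linarith

lemma sq_expand_add (T S : Matrix N N ℝ) (U : ℝ) :
    (T + U • S) * (T + U • S) = T * T + U • (T * S + S * T) + (U^2) • (S * S) := by
  simp only [add_mul, mul_add, smul_mul_assoc, mul_smul_comm, smul_smul, smul_add, pow_two]
  module

lemma sq_expand_sub (T S : Matrix N N ℝ) (U : ℝ) :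
    (T - U • S) * (T - U • S) = T * T - U • (T * S + S * T) + (U^2) • (S * S) := by
  simp only [sub_mul, mul_sub, smul_mul_assoc, mul_smul_comm, smul_smul, smul_add, pow_two]
  module

lemma pairsum {r : ℕ} (f : Fin r → ℝ) :
    ∑ p ∈ univ.filter (fun p : Fin r × Fin r => p.1 < p.2), f p.1 * f p.2
      = ((∑ σ, f σ)^2 - ∑ σ, (f σ)^2) / 2 := by
  have htot : (∑ σ, f σ)^2 = ∑ p : Fin r × Fin r, f p.1 * f p.2 := by
    rw [sq, Finset.sum_mul_sum, ← Finset.univ_product_univ, Finset.sum_product]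
  have hsplit := Finset.sum_filter_add_sum_filter_not (univ : Finset (Fin r × Fin r))
    (fun p => p.1 < p.2) (fun p => f p.1 * f p.2)
  have h3 := Finset.sum_filter_add_sum_filter_not
    (univ.filter fun p : Fin r × Fin r => ¬ p.1 < p.2)
    (fun p => p.2 < p.1) (fun p => f p.1 * f p.2)
  have hgt : ∑ p ∈ (univ.filter fun p : Fin r × Fin r => ¬ p.1 < p.2).filter
      (fun p => p.2 < p.1), f p.1 * f p.2
      = ∑ p ∈ univ.filter (fun p : Fin r × Fin r => p.1 < p.2), f p.1 * f p.2 := by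
    refine Finset.sum_nbij' (fun p => (p.2, p.1)) (fun p => (p.2, p.1)) ?_ ?_ ?_ ?_ ?_
    · intro a ha
      simp only [Finset.mem_filter, Finset.mem_univ, true_and] at ha ⊢
      exact ha.2
    · intro a ha
      simp only [Finset.mem_filter, Finset.mem_univ, true_and] at ha ⊢
      exact ⟨not_lt_of_gt ha, ha⟩
    · intro a _; rfl
    · intro a _; rfl
    · intro a _; exact mul_comm _ _
  have hdiag : ∑ p ∈ (univ.filter fun p : Fin r × Fin r => ¬ p.1 < p.2).filter
      (fun p => ¬ p.2 < p.1), f p.1 * f p.2 = ∑ σ, (f σ)^2 := by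
    refine Finset.sum_nbij' (fun p => p.1) (fun σ => (σ, σ)) ?_ ?_ ?_ ?_ ?_
    · intro a _; exact Finset.mem_univ _
    · intro a _
      simp
    · intro a ha
      simp only [Finset.mem_filter, Finset.mem_univ, true_and, not_lt] at ha
      have : a.1 = a.2 := le_antisymm ha.2 ha.1
      exact Prod.ext rfl this
    · intro a _; rfl
    · intro a ha
      simp only [Finset.mem_filter, Finset.mem_univ, true_and, not_lt] at ha
      have h : a.2 = a.1 := le_antisymm ha.1 ha.2
      rw [h, sq]
  rw [htot, ← hsplit, ← h3, hgt, hdiag]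
  ring

lemma row_sum {V : Type*} [Fintype V] [DecidableEq V] (G : SimpleGraph V) [DecidableRel G.Adj]
    {z : ℕ} (hreg : G.IsRegularOfDegree z) (x : V) (c : ℝ) :
    ∑ y, (if G.Adj x y then c else 0) = z * c := by
  rw [← Finset.sum_filter, Finset.sum_const]
  have h : (univ.filter (G.Adj x)).card = z := by
    rw [← SimpleGraph.neighborFinset_eq_filter]
    exact hreg x
  rw [h, nsmul_eq_mul]

lemma H0_form {V : Type*} [Fintype V] [DecidableEq V] (G : SimpleGraph V) [DecidableRel G.Adj]
    {z r : ℕ} (hreg : G.IsRegularOfDegree z) {I W : ℝ} (hIW : 4 * I = z * W)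
    (C : V → Fin r → Bool) :
    H0 G r I W C = W / 8 * (∑ x, ∑ y, if G.Adj x y then
        ((nsite C x - r/2) + (nsite C y - r/2))^2 else 0)
      - I * r * (Fintype.card V) / 4 := by
  set g : V → ℝ := fun x => nsite C x - r/2 with hg
  have honsite : ∀ x : V, ∑ p ∈ univ.filter (fun p : Fin r × Fin r => p.1 < p.2),
      (occ (C x p.1) - 1/2) * (occ (C x p.2) - 1/2) = ((g x)^2 - (r:ℝ)/4)/2 := by
    intro x
    rw [pairsum (fun σ => occ (C x σ) - 1/2)]
    have h1 : ∑ σ : Fin r, (occ (C x σ) - 1/2) = g x := by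
      rw [Finset.sum_sub_distrib, Finset.sum_const, Finset.card_univ, Fintype.card_fin,
        nsmul_eq_mul]
      simp only [hg, nsite]
      ring
    have h2 : ∑ σ : Fin r, (occ (C x σ) - 1/2)^2 = (r:ℝ)/4 := by
      have he : ∀ σ, (occ (C x σ) - 1/2)^2 = 1/4 := by
        intro σ; cases h : C x σ <;> simp [occ] <;> norm_num
      rw [Finset.sum_congr rfl fun σ _ => he σ, Finset.sum_const, Finset.card_univ,
        Fintype.card_fin, nsmul_eq_mul]
      ring
    rw [h1, h2]
  have hH0 : H0 G r I W C = I * ∑ x, (g x)^2 - I * r * (Fintype.card V) / 4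
      + W/4 * ∑ x, ∑ y, (if G.Adj x y then g x * g y else 0) := by
    unfold H0
    rw [Finset.sum_congr rfl fun x _ => honsite x, ← Finset.sum_div,
      Finset.sum_sub_distrib, Finset.sum_const, Finset.card_univ, nsmul_eq_mul]
    simp only [hg]
    ring
  have hz1 : ∑ x, ∑ y, (if G.Adj x y then (g x)^2 else 0) = z * ∑ x, (g x)^2 := by
    rw [Finset.mul_sum]
    exact Finset.sum_congr rfl fun x _ => row_sum G hreg x _
  have hz2 : ∑ x, ∑ y, (if G.Adj x y then (g y)^2 else 0) = z * ∑ x, (g x)^2 := by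
    rw [Finset.sum_comm, Finset.mul_sum]
    refine Finset.sum_congr rfl fun y _ => ?_
    rw [← row_sum G hreg y ((g y)^2)]
    refine Finset.sum_congr rfl fun x _ => ?_
    by_cases h : G.Adj x y
    · rw [if_pos h, if_pos (G.adj_symm h)]
    · rw [if_neg h, if_neg (fun h' => h (G.adj_symm h'))]
  have hsq : ∑ x, ∑ y, (if G.Adj x y then (g x + g y)^2 else 0)
      = (∑ x, ∑ y, (if G.Adj x y then (g x)^2 else 0))
        + (∑ x, ∑ y, (if G.Adj x y then (g y)^2 else 0))
        + 2 * ∑ x, ∑ y, (if G.Adj x y then g x * g y else 0) := by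
    rw [Finset.mul_sum, ← Finset.sum_add_distrib, ← Finset.sum_add_distrib]
    refine Finset.sum_congr rfl fun x _ => ?_
    rw [Finset.mul_sum, ← Finset.sum_add_distrib, ← Finset.sum_add_distrib]
    refine Finset.sum_congr rfl fun y _ => ?_
    split_ifs <;> ring
  have hzW : I = z * W / 4 := by linarith
  rw [hH0, hsq, hz1, hz2, hzW]
  simp only [hg]
  ring

lemma occ_sum {P Q : Prop} [Decidable P] [Decidable Q] (h : P ↔ ¬ Q) :
    occ (decide P) + occ (decide Q) = 1 := by
  by_cases hq : Q
  · have hp : ¬ P := fun hp => h.mp hp hq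
    simp [occ, hq, hp]
  · have hp : P := h.mpr hq
    simp [occ, hq, hp]

end Stmt14Aux

end AuxStmt14

set_option maxHeartbeats 1000000 in
/-- **Theorem 2(iii), matrix form.** For `t ≠ 0`, `U ≠ 0`, `W > 0`,
`4I = zW`, every configuration of kind (a) (one sublattice fully occupied by all species,
the other empty) or of kind (b) (a set `A` of species with `2|A| = r` or `2|A|+1 = r`
fully occupies one sublattice and the complementary species the other) minimizes `E`;
in particular all these configurations have the same energy. -/
theorem statement14
    {V : Type*} [Fintype V] [DecidableEq V]
    (G : SimpleGraph V) [DecidableRel G.Adj]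
    (z r : ℕ) (hz : 2 ≤ z) (hr : 2 ≤ r)
    (hreg : G.IsRegularOfDegree z) (hconn : G.Connected)
    (Λe Λo : Finset V)
    (hcover : ∀ v : V, v ∈ Λe ∨ v ∈ Λo) (hdisj : Disjoint Λe Λo)
    (hbip : ∀ x y : V, G.Adj x y → (x ∈ Λe ∧ y ∈ Λo) ∨ (x ∈ Λo ∧ y ∈ Λe))
    (t U I W : ℝ) (ht : t ≠ 0) (hU : U ≠ 0) (hW : 0 < W) (hIW : 4 * I = (z : ℝ) * W) :
    ∀ C : V → Fin r → Bool,
      ((C = fun x _ => decide (x ∈ Λe)) ∨ (C = fun x _ => decide (x ∈ Λo)) ∨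
        (∃ A : Finset (Fin r), (2 * A.card = r ∨ 2 * A.card + 1 = r) ∧
          (C = (fun x σ => decide ((x ∈ Λe) ↔ σ ∈ A)) ∨
           C = (fun x σ => decide ((x ∈ Λo) ↔ σ ∈ A))))) →
      ∀ C' : V → Fin r → Bool, Efun G r t U I W C ≤ Efun G r t U I W C' := by
  intro C hC C'
  classical
  set T := hopMat G t with hT
  have hTh : T.IsHermitian := by
    ext x y
    simp only [Matrix.conjTranspose_apply, hT, hopMat, Matrix.of_apply, star_trivial]
    by_cases h : G.Adj y x
    · rw [if_pos h, if_pos (G.adj_symm h)]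
    · rw [if_neg h, if_neg (fun h' => h (G.adj_symm h'))]
  have hSh : ∀ (Cc : V → Fin r → Bool) (σ : Fin r), (ionMat Cc σ).IsHermitian := by
    intro Cc σ
    unfold ionMat
    exact Matrix.isHermitian_diagonal _
  have hUSh : ∀ (Cc : V → Fin r → Bool) (σ : Fin r), (U • ionMat Cc σ).IsHermitian := by
    intro Cc σ
    have h := (hSh Cc σ).eq
    unfold Matrix.IsHermitian
    rw [Matrix.conjTranspose_smul, star_trivial, h]
  have hSS : ∀ (Cc : V → Fin r → Bool) (σ : Fin r), ionMat Cc σ * ionMat Cc σ = 1 := by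
    intro Cc σ
    unfold ionMat
    rw [Matrix.diagonal_mul_diagonal]
    have h : (fun x => (2 * occ (Cc x σ) - 1) * (2 * occ (Cc x σ) - 1)) = fun _ => (1:ℝ) := by
      funext x; cases h : Cc x σ <;> simp [occ] <;> norm_num
    rw [h, Matrix.diagonal_one]
  set eps : Matrix V V ℝ := Matrix.diagonal (fun x => if x ∈ Λe then 1 else -1) with heps
  have heps2 : eps * eps = 1 := by
    rw [heps, Matrix.diagonal_mul_diagonal]
    have h : (fun x => (if x ∈ Λe then (1:ℝ) else -1) * (if x ∈ Λe then 1 else -1))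
        = fun _ => (1:ℝ) := by
      funext x; by_cases h : x ∈ Λe <;> simp [h]
    rw [h, Matrix.diagonal_one]
  have hepsh : eps.IsHermitian := by rw [heps]; exact Matrix.isHermitian_diagonal _
  have hkey : ∀ x y, G.Adj x y → ((x ∈ Λe) ↔ ¬ (y ∈ Λe)) := by
    intro x y hadj
    have hd := Finset.disjoint_left.mp hdisj
    rcases hbip x y hadj with ⟨h1, h2⟩ | ⟨h1, h2⟩
    · exact ⟨fun _ hy => hd hy h2, fun _ => h1⟩
    · exact ⟨fun hx => (hd hx h1).elim, fun hy => (hy h2).elim⟩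
  have hkeyo : ∀ x y, G.Adj x y → ((x ∈ Λo) ↔ ¬ (y ∈ Λo)) := by
    intro x y hadj
    have hd := Finset.disjoint_right.mp hdisj
    rcases hbip x y hadj with ⟨h1, h2⟩ | ⟨h1, h2⟩
    · exact ⟨fun hx => (hd hx h1).elim, fun hy => (hy h2).elim⟩
    · exact ⟨fun _ hy => hd hy h2, fun _ => h1⟩
  have heTe : eps * T * eps = -T := by
    ext x y
    rw [heps, Matrix.mul_diagonal, Matrix.diagonal_mul]
    simp only [hT, hopMat, Matrix.of_apply, Matrix.neg_apply]
    by_cases h : G.Adj x y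
    · rw [if_pos h]
      have hk := hkey x y h
      by_cases hx : x ∈ Λe
      · have hy : y ∉ Λe := hk.mp hx
        rw [if_pos hx, if_neg hy]; ring
      · have hy : y ∈ Λe := by by_contra hy; exact hx (hk.mpr hy)
        rw [if_neg hx, if_pos hy]; ring
    · rw [if_neg h]; ring
  have heSe : ∀ (Cc : V → Fin r → Bool) (σ : Fin r),
      eps * ionMat Cc σ * eps = ionMat Cc σ := by
    intro Cc σ
    rw [heps]; unfold ionMat
    rw [Matrix.diagonal_mul_diagonal, Matrix.diagonal_mul_diagonal]
    ext i j
    by_cases hij : i = j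
    · subst hij
      simp only [Matrix.diagonal_apply_eq]
      by_cases hx : i ∈ Λe
      · simp only [if_pos hx]; ring
      · simp only [if_neg hx]; ring
    · rw [Matrix.diagonal_apply_ne _ hij, Matrix.diagonal_apply_ne _ hij]
  set D := T * T + (U^2) • (1 : Matrix V V ℝ) with hD0
  have hDpd : D.PosDef := by
    rw [hD0]
    apply Matrix.PosDef.posSemidef_add
    · have h := Matrix.posSemidef_conjTranspose_mul_self T
      rwa [hTh.eq] at h
    · have h1 : (U^2) • (1 : Matrix V V ℝ) = Matrix.diagonal (fun _ => U^2) := by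
        ext i j
        by_cases h : i = j <;>
          simp [Matrix.one_apply, Matrix.diagonal_apply, h]
      rw [h1]
      exact Matrix.PosDef.diagonal (fun _ => by positivity)
  set B := hDpd.posSemidef.sqrt with hB
  have hboundσ : ∀ (Cc : V → Fin r → Bool) (σ : Fin r),
      trAbs (T + U • ionMat Cc σ) ≤ B.trace := by
    intro Cc σ
    set S := ionMat Cc σ with hS
    have hhp : (T + U • S).IsHermitian := hTh.add (hUSh Cc σ)
    have hhm : (T - U • S).IsHermitian := hTh.sub (hUSh Cc σ)
    have hsum : (T + U • S) * (T + U • S) + (T - U • S) * (T - U • S) = (2:ℝ) • D := by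
      rw [Stmt14Aux.sq_expand_add, Stmt14Aux.sq_expand_sub, hSS Cc σ, hD0]
      module
    have hpair := Stmt14Aux.electron_pair_bound hhp hhm hDpd hsum
    have hflip : eps * (T + U • S) * eps = U • S - T := by
      rw [Matrix.mul_add eps T (U • S), Matrix.add_mul, mul_smul_comm, smul_mul_assoc,
        heTe, heSe Cc σ]
      abel
    have heq : trAbs (T - U • S) = trAbs (T + U • S) := by
      have h1 : trAbs (U • S - T) = trAbs (T + U • S) := by
        rw [← hflip]; exact Stmt14Aux.trAbs_conj hhp heps2 hepsh
      calc trAbs (T - U • S) = trAbs (-(U • S - T)) := by rw [neg_sub]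
        _ = trAbs (U • S - T) := Stmt14Aux.trAbs_neg _
        _ = trAbs (T + U • S) := h1
    rw [heq] at hpair
    linarith
  have hP : ∀ (σ : Fin r) (x y : V), G.Adj x y → occ (C x σ) + occ (C y σ) = 1 := by
    intro σ x y hadj
    have h1 := hkey x y hadj
    have h2 := hkeyo x y hadj
    rcases hC with h | h | ⟨A, _, h | h⟩ <;> subst h
    · exact Stmt14Aux.occ_sum h1
    · exact Stmt14Aux.occ_sum h2
    · exact Stmt14Aux.occ_sum (by tauto)
    · exact Stmt14Aux.occ_sum (by tauto)
  have hTSST : ∀ σ : Fin r, T * ionMat C σ + ionMat C σ * T = 0 := by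
    intro σ
    ext x y
    simp only [Matrix.add_apply, ionMat, Matrix.mul_diagonal, Matrix.diagonal_mul,
      Matrix.zero_apply, hT, hopMat, Matrix.of_apply]
    by_cases h : G.Adj x y
    · rw [if_pos h]
      have hxy := hP σ x y h
      linear_combination (2 * t) * hxy
    · rw [if_neg h]; ring
  have helectronC : ∀ σ : Fin r, trAbs (T + U • ionMat C σ) = B.trace := by
    intro σ
    have hsq : (T + U • ionMat C σ) * (T + U • ionMat C σ) = D := by
      rw [Stmt14Aux.sq_expand_add, hTSST σ, hSS C σ, hD0, smul_zero, add_zero]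
    rw [hB]
    exact Stmt14Aux.trAbs_of_sq hDpd.posSemidef hsq
  have hnsite : ∀ x y, G.Adj x y → nsite C x + nsite C y = (r:ℝ) := by
    intro x y h
    unfold nsite
    rw [← Finset.sum_add_distrib, Finset.sum_congr rfl fun σ _ => hP σ x y h,
      Finset.sum_const, Finset.card_univ, Fintype.card_fin, nsmul_eq_mul, mul_one]
  have hH0C : H0 G r I W C = - (I * r * (Fintype.card V) / 4) := by
    rw [Stmt14Aux.H0_form G hreg hIW C]
    have hzero : ∀ x : V, ∑ y, (if G.Adj x y then
        ((nsite C x - r/2) + (nsite C y - r/2))^2 else 0) = 0 := by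
      intro x
      refine Finset.sum_eq_zero fun y _ => ?_
      by_cases h : G.Adj x y
      · rw [if_pos h]
        have hns := hnsite x y h
        have hz : (nsite C x - r/2) + (nsite C y - r/2) = 0 := by linarith
        rw [hz]; norm_num
      · rw [if_neg h]
    rw [Finset.sum_congr rfl fun x _ => hzero x, Finset.sum_const_zero]
    ring
  have hH0C' : - (I * r * (Fintype.card V) / 4) ≤ H0 G r I W C' := by
    rw [Stmt14Aux.H0_form G hreg hIW C']
    have hnn : 0 ≤ ∑ x : V, ∑ y : V, (if G.Adj x y then
        ((nsite C' x - r/2) + (nsite C' y - r/2))^2 else 0) := by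
      refine Finset.sum_nonneg ?_
      intro x _
      refine Finset.sum_nonneg ?_
      intro y _
      by_cases h : G.Adj x y
      · rw [if_pos h]; exact sq_nonneg _
      · rw [if_neg h]
    have hWS := mul_nonneg (by linarith : (0:ℝ) ≤ W / 8) hnn
    linarith
  unfold Efun
  have hsumC : ∑ σ : Fin r, trAbs (T + U • ionMat C σ) = r * B.trace := by
    rw [Finset.sum_congr rfl fun σ _ => helectronC σ, Finset.sum_const, Finset.card_univ,
      Fintype.card_fin, nsmul_eq_mul]
  have hsumC' : ∑ σ : Fin r, trAbs (T + U • ionMat C' σ) ≤ r * B.trace := by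
    calc ∑ σ : Fin r, trAbs (T + U • ionMat C' σ) ≤ ∑ _σ : Fin r, B.trace :=
          Finset.sum_le_sum fun σ _ => hboundσ C' σ
      _ = r * B.trace := by
          rw [Finset.sum_const, Finset.card_univ, Fintype.card_fin, nsmul_eq_mul]
  rw [hsumC, hH0C]
  nlinarith [hsumC', hH0C']
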